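/- Under the transformation T on discrete probability measures given by [z_{k+1}]ᵢ = (1 - λᵢ/μ₁ᵏ)[z_k]ᵢ / (μ₂ᵏ/(μ₁ᵏ)² - 1)^{1/2}, the quantity L_k = μ₁ᵏ μ₋₁ᵏ satisfies L_{k+1} - L_k = (μ₁ᵏ / D_k²) · det M_k, where D_k = μ₂ᵏ - (μ₁ᵏ)² and M_k is the moment matrix [[μ₋₁ᵏ, 1, μ₁ᵏ],[1, μ₁ᵏ, μ₂ᵏ],[μ₁ᵏ, μ₂ᵏ, μ₃ᵏ]]. In particular L_{k+1} ≥ L_k. -/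

import Mathlib

open Finset

theorem L_increase_formula
    (d : ℕ) (l : Fin d → ℝ) (hl : ∀ i, 0 < l i) (hmono : StrictMono l)
    (z z' : Fin d → ℝ)
    (hz : ∑ i, z i ^ 2 = 1)
    (μ μ' : ℤ → ℝ)
    (hμ : ∀ j : ℤ, μ j = ∑ i, l i ^ j * z i ^ 2)
    (hμ' : ∀ j : ℤ, μ' j = ∑ i, l i ^ j * z' i ^ 2)
    (hnondeg : (μ 1) ^ 2 < μ 2)
    (hz' : ∀ i, z' i = (1 - l i / μ 1) * z i / Real.sqrt (μ 2 / (μ 1) ^ 2 - 1)) :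
    μ' 1 * μ' (-1) - μ 1 * μ (-1)
      = μ 1 / (μ 2 - (μ 1) ^ 2) ^ 2 *
        (!![μ (-1), 1, μ 1; 1, μ 1, μ 2; μ 1, μ 2, μ 3] : Matrix (Fin 3) (Fin 3) ℝ).det ∧
    μ 1 * μ (-1) ≤ μ' 1 * μ' (-1) := by
  have hd : 0 < d := by
    by_contra h
    push_neg at h
    interval_cases d
    simp at hz
  have hμ1 : 0 < μ 1 := by
    have h0 : (0 : ℝ) < l ⟨0, hd⟩ := hl _
    have h1 : l ⟨0, hd⟩ * 1 ≤ μ 1 := by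
      rw [hμ 1, ← hz, Finset.mul_sum]
      refine Finset.sum_le_sum fun i _ => ?_
      have hle : l ⟨0, hd⟩ ≤ l i := hmono.monotone (Fin.mk_le_of_le_val (Nat.zero_le _))
      have := sq_nonneg (z i)
      simpa [zpow_one] using mul_le_mul_of_nonneg_right hle this
    nlinarith
  have hμ1ne : μ 1 ≠ 0 := hμ1.ne'
  set c : ℝ := μ 2 / μ 1 ^ 2 - 1 with hc_def
  have hD : 0 < μ 2 - μ 1 ^ 2 := by linarith
  have hDne : μ 2 - μ 1 ^ 2 ≠ 0 := hD.ne'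
  have hc : 0 < c := by
    rw [hc_def, sub_pos, lt_div_iff₀ (by positivity)]
    linarith
  have hcne : c ≠ 0 := hc.ne'
  have hl0 : ∀ i, l i ≠ 0 := fun i => (hl i).ne'
  have collect : ∀ (A B C : Fin d → ℝ),
      (∑ i, A i) * μ 1 ^ 2 - 2 * (∑ i, B i) * μ 1 + (∑ i, C i)
        = ∑ i, (A i * μ 1 ^ 2 - 2 * B i * μ 1 + C i) := by
    intro A B C
    rw [Finset.sum_mul, Finset.mul_sum, Finset.sum_mul, ← Finset.sum_sub_distrib,
      ← Finset.sum_add_distrib]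
  -- key product identity for μ'
  have key : ∀ j : ℤ, μ' j * (c * μ 1 ^ 2)
      = μ j * μ 1 ^ 2 - 2 * μ (j+1) * μ 1 + μ (j+2) := by
    intro j
    rw [hμ j, hμ (j+1), hμ (j+2), collect, hμ' j, Finset.sum_mul]
    refine Finset.sum_congr rfl fun i _ => ?_
    rw [hz' i, div_pow, mul_pow, Real.sq_sqrt hc.le,
      zpow_add₀ (hl0 i) j 1, zpow_add₀ (hl0 i) j 2, zpow_one,
      show l i ^ (2:ℤ) = l i ^ (2:ℕ) from rfl]
    field_simp
    ring
  have hμ0 : μ 0 = 1 := by rw [hμ 0]; simpa using hz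
  set M : Matrix (Fin 3) (Fin 3) ℝ :=
    !![μ (-1), 1, μ 1; 1, μ 1, μ 2; μ 1, μ 2, μ 3] with hM_def
  have hMsd : M.PosSemidef := by
    rw [Matrix.posSemidef_iff_dotProduct_mulVec]
    constructor
    · ext i j
      fin_cases i <;> fin_cases j <;>
        simp [hM_def, Matrix.conjTranspose_apply]
    · intro x
      have hR : ∑ i, (z i)^2 * ((l i)⁻¹ * (x 0 + x 1*l i + x 2*l i^2)^2)
          = x 0^2 * (∑ i, l i ^ (-1:ℤ) * z i^2) + 2*x 0*x 1*(∑ i, z i^2)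
            + (2*x 0*x 2 + x 1^2) * (∑ i, l i ^(1:ℤ) * z i^2)
            + 2*x 1*x 2*(∑ i, l i^(2:ℤ)*z i^2) + x 2^2*(∑ i, l i^(3:ℤ)*z i^2) := by
        simp only [Finset.mul_sum]
        rw [← Finset.sum_add_distrib, ← Finset.sum_add_distrib, ← Finset.sum_add_distrib,
          ← Finset.sum_add_distrib]
        refine Finset.sum_congr rfl fun i _ => ?_
        have h2 : l i ^ (2:ℤ) = l i ^ (2:ℕ) := rfl
        have h3 : l i ^ (3:ℤ) = l i ^ (3:ℕ) := rfl
        have hm : l i ^ (-1:ℤ) = (l i)⁻¹ := zpow_neg_one (l i)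
        rw [h2, h3, hm, zpow_one]
        field_simp [hl0 i]
        ring
      have hx : dotProduct (star x) (M.mulVec x)
          = ∑ i, (z i) ^ 2 * ((l i)⁻¹ * (x 0 + x 1 * l i + x 2 * l i ^ 2) ^ 2) := by
        rw [hR, hz, ← hμ (-1), ← hμ 1, ← hμ 2, ← hμ 3]
        simp [hM_def, dotProduct, Matrix.mulVec, Fin.sum_univ_three]
        ring
      rw [hx]
      refine Finset.sum_nonneg fun i _ => ?_
      have := hl i
      positivity
  have hdet : 0 ≤ M.det := by
    rw [hMsd.1.det_eq_prod_eigenvalues]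
    exact Finset.prod_nonneg fun i _ => hMsd.eigenvalues_nonneg i
  have hdetval : M.det = μ (-1) * (μ 1 * μ 3 - μ 2 * μ 2) - (μ 3 - μ 2 * μ 1)
      + μ 1 * (μ 2 - μ 1 * μ 1) := by
    rw [hM_def, Matrix.det_fin_three]
    simp
    ring
  have k1 := key 1
  have km1 := key (-1)
  norm_num at k1 km1
  rw [hμ0] at km1
  have hcm : c * μ 1 ^ 2 ≠ 0 := by positivity
  have h1 : μ' 1 = (μ 1 * μ 1 ^ 2 - 2 * μ 2 * μ 1 + μ 3) / (c * μ 1 ^ 2) :=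
    eq_div_of_mul_eq hcm k1
  have hm1 : μ' (-1) = (μ (-1) * μ 1 ^ 2 - 2 * 1 * μ 1 + μ 1) / (c * μ 1 ^ 2) :=
    eq_div_of_mul_eq hcm km1
  have formula : μ' 1 * μ' (-1) - μ 1 * μ (-1)
      = μ 1 / (μ 2 - (μ 1) ^ 2) ^ 2 * M.det := by
    rw [h1, hm1, hdetval, hc_def]
    field_simp
    ring
  refine ⟨formula, ?_⟩
  nlinarith [mul_nonneg (div_nonneg hμ1.le (sq_nonneg (μ 2 - μ 1 ^ 2))) hdet]
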